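/- Let σ ⊆ ℝ^n be a closed convex cone with dual cone σ̌, and let τ be a face of σ. Then τ* := τ^⊥ ∩ σ̌ is a face of σ̌. -/
import Mathlib


open Finset

/-- The dual cone of `σ ⊆ ℝⁿ` with respect to the standard pairing. -/
def dualCone {n : ℕ} (σ : Set (Fin n → ℝ)) : Set (Fin n → ℝ) :=
  {χ | ∀ x ∈ σ, 0 ≤ ∑ i, x i * χ i}

/-- `F` is a face of the convex cone `C`: a convex subcone which is extreme, i.e. closed
under splitting sums of elements of `C`. -/
def IsFaceOf {n : ℕ} (F C : Set (Fin n → ℝ)) : Prop :=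
  F ⊆ C ∧ Convex ℝ F ∧ (∀ c : ℝ, 0 < c → ∀ x ∈ F, c • x ∈ F) ∧
    ∀ x ∈ C, ∀ y ∈ C, x + y ∈ F → x ∈ F ∧ y ∈ F

/-- The dual face `τ* = τ^⊥ ∩ σ̌` of a face `τ` of `σ`. -/
def dualFace {n : ℕ} (σ τ : Set (Fin n → ℝ)) : Set (Fin n → ℝ) :=
  {χ ∈ dualCone σ | ∀ x ∈ τ, ∑ i, x i * χ i = 0}

/-- for a face `τ` of a closed convex cone `σ`, the set
`τ* = τ^⊥ ∩ σ̌` is a face of the dual cone `σ̌`. -/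
theorem dualFace_isFaceOf_dualCone
    {n : ℕ} (σ : Set (Fin n → ℝ)) (hclosed : IsClosed σ) (hconv : Convex ℝ σ)
    (h0 : (0 : Fin n → ℝ) ∈ σ)
    (hcone : ∀ c : ℝ, 0 < c → ∀ x ∈ σ, c • x ∈ σ)
    (τ : Set (Fin n → ℝ)) (hτ : IsFaceOf τ σ) :
    IsFaceOf (dualFace σ τ) (dualCone σ) := by
  obtain ⟨hτσ, -, -, -⟩ := hτ
  refine ⟨fun χ hχ => hχ.1, ?_, ?_, ?_⟩
  · rintro χ hχ ψ hψ a b ha hb hab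
    constructor
    · intro x hx
      have h1 := hχ.1 x hx
      have h2 := hψ.1 x hx
      simp only [Pi.add_apply, Pi.smul_apply, smul_eq_mul]
      have : ∑ i, x i * (a * χ i + b * ψ i)
          = a * ∑ i, x i * χ i + b * ∑ i, x i * ψ i := by
        rw [Finset.mul_sum, Finset.mul_sum, ← Finset.sum_add_distrib]
        exact Finset.sum_congr rfl fun i _ => by ring
      rw [this]
      positivity
    · intro x hx
      have h1 := hχ.2 x hx
      have h2 := hψ.2 x hx
      simp only [Pi.add_apply, Pi.smul_apply, smul_eq_mul]
      have : ∑ i, x i * (a * χ i + b * ψ i)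
          = a * ∑ i, x i * χ i + b * ∑ i, x i * ψ i := by
        rw [Finset.mul_sum, Finset.mul_sum, ← Finset.sum_add_distrib]
        exact Finset.sum_congr rfl fun i _ => by ring
      rw [this, h1, h2]; ring
  · rintro c hc χ hχ
    constructor
    · intro x hx
      have h1 := hχ.1 x hx
      simp only [Pi.smul_apply, smul_eq_mul]
      have : ∑ i, x i * (c * χ i) = c * ∑ i, x i * χ i := by
        rw [Finset.mul_sum]; exact Finset.sum_congr rfl fun i _ => by ring
      rw [this]; positivity
    · intro x hx
      have h1 := hχ.2 x hx
      simp only [Pi.smul_apply, smul_eq_mul]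
      have : ∑ i, x i * (c * χ i) = c * ∑ i, x i * χ i := by
        rw [Finset.mul_sum]; exact Finset.sum_congr rfl fun i _ => by ring
      rw [this, h1]; ring
  · intro χ hχ ψ hψ hsum
    have key : ∀ x ∈ τ, ∑ i, x i * χ i = 0 ∧ ∑ i, x i * ψ i = 0 := by
      intro x hx
      have h1 := hχ x (hτσ hx)
      have h2 := hψ x (hτσ hx)
      have h3 := hsum.2 x hx
      have h4 : ∑ i, x i * (χ + ψ) i = ∑ i, x i * χ i + ∑ i, x i * ψ i := by
        rw [← Finset.sum_add_distrib]
        exact Finset.sum_congr rfl fun i _ => by simp [Pi.add_apply]; ring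
      rw [h4] at h3
      constructor <;> linarith
    exact ⟨⟨hχ, fun x hx => (key x hx).1⟩, ⟨hψ, fun x hx => (key x hx).2⟩⟩
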